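/- Fix λ > 0, an integer l ≥ 1, and constants G₀ > 0, c_B > 0. Define p̃ⁱ(x) = (G₀·c_B/√λ)·((1/(√λ + 1) − 1/(√(λ + l²) + √(1 + l²)))·e^{l·x} + e^{√(λ + l²)·x}/(√(λ + l²) + √(1 + l²))), and let c̃ⁱ(x) = −(√λ·c_B/(√(λ + l²) + √(1 + l²)))·e^{√(λ + l²)·x} and p₀ⁱ(x) = (G₀·c_B/(λ(√λ + 1)))·(1 − e^{√λ·x}). Then: (1) −(p̃ⁱ)''(x) + l²·p̃ⁱ(x) = G₀·c̃ⁱ(x) for all x ≤ 0; (2) (p₀ⁱ)'(0) + p̃ⁱ(0) = 0; (3) p̃ⁱ is bounded on (−∞, 0]. -/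

import Mathlib

lemma exp_deriv_aux (c k : ℝ) (x : ℝ) :
    HasDerivAt (fun x : ℝ => c * Real.exp (k * x)) (c * k * Real.exp (k * x)) x := by
  have h0 : HasDerivAt (fun x : ℝ => k * x) k x := by
    simpa using (hasDerivAt_id x).const_mul k
  have h : HasDerivAt (fun x : ℝ => Real.exp (k * x)) (Real.exp (k * x) * k) x := h0.exp
  have := h.const_mul c
  rw [show c * k * Real.exp (k * x) = c * (Real.exp (k * x) * k) by ring]
  exact this

theorem stmt_14 (G0 cB lam : ℝ) (hG0 : 0 < G0) (hcB : 0 < cB) (hlam : 0 < lam)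
    (l : ℕ) (hl : 1 ≤ l)
    (p0i cti pti : ℝ → ℝ)
    (hp0i : p0i = fun x : ℝ =>
      G0 * cB / (lam * (Real.sqrt lam + 1)) * (1 - Real.exp (Real.sqrt lam * x)))
    (hcti : cti = fun x : ℝ =>
      -(Real.sqrt lam * cB / (Real.sqrt (lam + (l : ℝ) ^ 2) + Real.sqrt (1 + (l : ℝ) ^ 2))) *
        Real.exp (Real.sqrt (lam + (l : ℝ) ^ 2) * x))
    (hpti : pti = fun x : ℝ =>
      G0 * cB / Real.sqrt lam *
        ((1 / (Real.sqrt lam + 1) -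
            1 / (Real.sqrt (lam + (l : ℝ) ^ 2) + Real.sqrt (1 + (l : ℝ) ^ 2))) *
          Real.exp ((l : ℝ) * x) +
          Real.exp (Real.sqrt (lam + (l : ℝ) ^ 2) * x) /
            (Real.sqrt (lam + (l : ℝ) ^ 2) + Real.sqrt (1 + (l : ℝ) ^ 2)))) :
    (∀ x : ℝ, x ≤ 0 → -(deriv (deriv pti) x) + (l : ℝ) ^ 2 * pti x = G0 * cti x) ∧
    deriv p0i 0 + pti 0 = 0 ∧
    (∃ C : ℝ, ∀ x : ℝ, x ≤ 0 → |pti x| ≤ C) := by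
  set s := Real.sqrt lam with hs
  set μ := Real.sqrt (lam + (l : ℝ) ^ 2) with hμ
  set ν := Real.sqrt (1 + (l : ℝ) ^ 2) with hν
  have hs0 : 0 < s := Real.sqrt_pos.mpr hlam
  have hl0 : (0 : ℝ) < (l : ℝ) := by exact_mod_cast Nat.lt_of_lt_of_le Nat.zero_lt_one hl
  have hμ0 : 0 < μ := Real.sqrt_pos.mpr (by positivity)
  have hν0 : 0 < ν := Real.sqrt_pos.mpr (by positivity)
  have hs2 : s ^ 2 = lam := Real.sq_sqrt hlam.le
  have hμ2 : μ ^ 2 = lam + (l : ℝ) ^ 2 := Real.sq_sqrt (by positivity)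
  have hD0 : μ + ν ≠ 0 := by positivity
  have hs10 : s + 1 ≠ 0 := by positivity
  set A := G0 * cB / s with hA
  set B := 1 / (s + 1) - 1 / (μ + ν) with hB
  -- rewrite pti as a sum of two exponentials
  have hpti' : pti = fun x : ℝ => A * B * Real.exp ((l : ℝ) * x) + A / (μ + ν) * Real.exp (μ * x) := by
    rw [hpti]; funext x; ring
  have hderiv : deriv pti = fun x : ℝ =>
      A * B * (l : ℝ) * Real.exp ((l : ℝ) * x) + A / (μ + ν) * μ * Real.exp (μ * x) := by
    funext x
    rw [hpti']
    exact ((exp_deriv_aux (A * B) (l : ℝ) x).add (exp_deriv_aux (A / (μ + ν)) μ x)).deriv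
  have hderiv2 : ∀ x : ℝ, deriv (deriv pti) x =
      A * B * (l : ℝ) * (l : ℝ) * Real.exp ((l : ℝ) * x) +
        A / (μ + ν) * μ * μ * Real.exp (μ * x) := by
    intro x
    rw [hderiv]
    exact ((exp_deriv_aux (A * B * (l : ℝ)) (l : ℝ) x).add
      (exp_deriv_aux (A / (μ + ν) * μ) μ x)).deriv
  refine ⟨?_, ?_, ?_⟩
  · intro x hx
    rw [hderiv2 x, hpti', hcti]
    have key : A / (μ + ν) * ((l : ℝ) ^ 2 - μ ^ 2) = G0 * (-(s * cB / (μ + ν))) := by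
      rw [hμ2, hA, ← hs2]
      field_simp
      ring
    simp only
    linear_combination Real.exp (μ * x) * key
  · have hd0 : HasDerivAt p0i
        (G0 * cB / (lam * (s + 1)) * (-(s * Real.exp (s * 0)))) 0 := by
      rw [hp0i]
      have h1 : HasDerivAt (fun x : ℝ => 1 - Real.exp (s * x)) (-(s * Real.exp (s * 0))) 0 := by
        have := (exp_deriv_aux 1 s 0).const_sub 1
        rw [show (fun x : ℝ => 1 - Real.exp (s * x)) = fun x => 1 - 1 * Real.exp (s * x) by funext x; ring,
          show -(s * Real.exp (s * 0)) = -(1 * s * Real.exp (s * 0)) by ring]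
        exact this
      exact h1.const_mul _
    rw [hd0.deriv, hpti]
    simp only [mul_zero, Real.exp_zero]
    have e1 : (1 / (s + 1) - 1 / (μ + ν)) * 1 + 1 / (μ + ν) = 1 / (s + 1) := by ring
    rw [e1, ← hs2]
    field_simp
    rw [hA]
    field_simp
    ring
  · refine ⟨|A * B| + |A / (μ + ν)|, fun x hx => ?_⟩
    rw [hpti']
    have h1 : Real.exp ((l : ℝ) * x) ≤ 1 :=
      Real.exp_le_one_iff.mpr (by nlinarith)
    have h2 : Real.exp (μ * x) ≤ 1 :=
      Real.exp_le_one_iff.mpr (by nlinarith)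
    have b1 : |A * B * Real.exp ((l : ℝ) * x)| ≤ |A * B| := by
      rw [abs_mul, abs_of_pos (Real.exp_pos _)]
      exact mul_le_of_le_one_right (abs_nonneg _) h1
    have b2 : |A / (μ + ν) * Real.exp (μ * x)| ≤ |A / (μ + ν)| := by
      rw [abs_mul, abs_of_pos (Real.exp_pos _)]
      exact mul_le_of_le_one_right (abs_nonneg _) h2
    calc |A * B * Real.exp ((l : ℝ) * x) + A / (μ + ν) * Real.exp (μ * x)|
        ≤ |A * B * Real.exp ((l : ℝ) * x)| + |A / (μ + ν) * Real.exp (μ * x)| := abs_add_le _ _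
      _ ≤ |A * B| + |A / (μ + ν)| := add_le_add b1 b2
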